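/- Let n ≥ 1, let C be a cyclic ZMod 2-submodule of (Fin n → ZMod 2), and let l ∈ {0, 1, …, n−1}. Then the following are equivalent: (i) for all p, q ∈ {0, 1, …, n−1} with p ≠ q, L(v_p, l) + L(v_q, l) ∉ C; (ii) for all m ∈ {1, …, n−1}, v_m ∉ C. (This is the intrinsic, matrix-free form of Lemma 3 of the paper: since errors have the same syndrome exactly when their difference lies in the kernel of the parity check matrix, which equals C, the shifted consecutive error set E_{l,n} is distinguishable if and only if no nonzero proper consecutive tail vector lies in C.) -/
import Mathlib


/-- The consecutive tail vector `v_p`: indicator of the last `p` coordinates. -/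
def tailVec (n p : ℕ) : Fin n → ZMod 2 := fun j => if n - p ≤ j.val then 1 else 0

/-- Left cyclic shift by `l` of a vector `v : Fin n → ZMod 2`. -/
def shiftL {n : ℕ} (v : Fin n → ZMod 2) (l : ℕ) : Fin n → ZMod 2 :=
  fun j => v ⟨(j.val + l) % n, Nat.mod_lt _ j.pos⟩

/-- A code is cyclic if it is invariant under left cyclic shifts. -/
def IsCyclicCode {n : ℕ} (C : Submodule (ZMod 2) (Fin n → ZMod 2)) : Prop :=
  ∀ v ∈ C, ∀ l : ℕ, shiftL v l ∈ C

/-- The dual code `C⊥` with respect to the standard bilinear form. -/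
def dualCode {n : ℕ} (C : Submodule (ZMod 2) (Fin n → ZMod 2)) :
    Submodule (ZMod 2) (Fin n → ZMod 2) where
  carrier := {u | ∀ w ∈ C, ∑ j, u j * w j = 0}
  add_mem' := by
    intro a b ha hb w hw
    simp only [Set.mem_setOf_eq, Pi.add_apply, add_mul] at *
    rw [Finset.sum_add_distrib, ha w hw, hb w hw, add_zero]
  zero_mem' := by
    intro w hw
    simp
  smul_mem' := by
    intro c a ha w hw
    simp only [Set.mem_setOf_eq, Pi.smul_apply, smul_eq_mul, mul_assoc] at *
    rw [← Finset.mul_sum, ha w hw, mul_zero]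

lemma shiftL_add {n : ℕ} (u v : Fin n → ZMod 2) (l : ℕ) :
    shiftL (u + v) l = shiftL u l + shiftL v l := rfl

lemma shiftL_shiftL {n : ℕ} (v : Fin n → ZMod 2) (a b : ℕ) :
    shiftL (shiftL v a) b = shiftL v (b + a) := by
  funext j
  simp only [shiftL]
  congr 1
  apply Fin.ext
  simp [Nat.mod_add_mod, Nat.add_assoc]

lemma shiftL_mem_iff {n : ℕ} (C : Submodule (ZMod 2) (Fin n → ZMod 2))
    (hC : IsCyclicCode C) (l : ℕ) (hl : l ≤ n) (w : Fin n → ZMod 2) :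
    shiftL w l ∈ C ↔ w ∈ C := by
  constructor
  · intro h
    have := hC _ h (n - l)
    rw [shiftL_shiftL] at this
    have he : shiftL w (n - l + l) = w := by
      funext j
      simp only [shiftL]
      congr 1
      apply Fin.ext
      simp only
      have : j.val + (n - l + l) = j.val + n := by omega
      rw [this, Nat.add_mod_right, Nat.mod_eq_of_lt j.isLt]
    rwa [he] at this
  · intro h; exact hC _ h l

lemma tail_add (n p q : ℕ) (hpq : p < q) (hq : q < n) :
    tailVec n p + tailVec n q = shiftL (tailVec n (q - p)) p := by
  funext j
  have hj := j.isLt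
  simp only [tailVec, shiftL, Pi.add_apply]
  by_cases h : j.val + p < n
  · simp only [Nat.mod_eq_of_lt h]
    split_ifs <;> first | rfl | omega | decide
  · have hm : (j.val + p) % n = j.val + p - n := by
      rw [Nat.mod_eq_sub_mod (by omega), Nat.mod_eq_of_lt (by omega)]
    simp only [hm]
    split_ifs <;> first | rfl | omega | decide

theorem stmt4 (n : ℕ) (hn : 1 ≤ n) (C : Submodule (ZMod 2) (Fin n → ZMod 2))
    (hC : IsCyclicCode C) (l : ℕ) (hl : l < n) :
    (∀ p q : ℕ, p < n → q < n → p ≠ q →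
        shiftL (tailVec n p) l + shiftL (tailVec n q) l ∉ C) ↔
      (∀ m : ℕ, 1 ≤ m → m ≤ n - 1 → tailVec n m ∉ C) := by
  constructor
  · intro h m hm1 hm2 hmC
    have h0 : tailVec n 0 = 0 := by
      funext j; simp only [tailVec]; rw [if_neg (by omega)]; rfl
    have : shiftL (tailVec n m) l + shiftL (tailVec n 0) l ∈ C := by
      have h0' : shiftL (tailVec n 0) l = 0 := by rw [h0]; rfl
      rw [h0', add_zero]
      exact hC _ hmC l
    exact h m 0 (by omega) (by omega) (by omega) this
  · intro h p q hp hq hpq hmem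
    have key : ∀ p q : ℕ, p < q → q < n →
        shiftL (tailVec n p) l + shiftL (tailVec n q) l ∈ C → False := by
      intro p q hpq' hq' hmem'
      rw [← shiftL_add, tail_add n p q hpq' hq'] at hmem'
      rw [shiftL_mem_iff C hC l (by omega), shiftL_mem_iff C hC p (by omega)] at hmem'
      exact h (q - p) (by omega) (by omega) hmem'
    rcases lt_or_gt_of_ne hpq with h' | h'
    · exact key p q h' hq hmem
    · rw [add_comm] at hmem; exact key q p h' hp hmem
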